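/- Let P be row-stochastic on finite S with a closed set R ⊆ S and transient part T = S \ R, and suppose ∑_{n=0}^∞ (P^n)_{t,t'} ≤ N for all t,t' ∈ T (boundedness of expected visits to transient states). Let W ∈ ℝ^S with W(t) ≥ w_B for all t ∈ T, where w_B < 0, and W(r) ≥ 0 for all r ∈ R. Then for every t ∈ T and every γ ∈ (0,1), the discounted utility satisfies U(t) ≥ |T| · N · w_B. -/

import Mathlib

open Matrix Finset

theorem transient_utility_lower_bound {S : Type*} [Fintype S] [DecidableEq S]
    (P : Matrix S S ℝ)
    (hnn : ∀ i j, 0 ≤ P i j) (hrow : ∀ i, ∑ j, P i j = 1)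
    (R : Finset S)
    (hclosed : ∀ r ∈ R, ∀ t, t ∉ R → P r t = 0)
    (N : ℝ)
    (hvisit : ∀ t ∉ R, ∀ t' ∉ R, ∀ m : ℕ, ∑ n ∈ Finset.range m, (P ^ n) t t' ≤ N)
    (W : S → ℝ) (wB : ℝ) (hwB : wB < 0)
    (hWT : ∀ t ∉ R, wB ≤ W t) (hWR : ∀ r ∈ R, 0 ≤ W r) :
    ∀ t ∉ R, ∀ γ : ℝ, 0 < γ → γ < 1 →
      ((Rᶜ : Finset S).card : ℝ) * N * wB ≤ ∑' n : ℕ, γ ^ n * ((P ^ n).mulVec W) t := by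
  intro t ht γ hγ0 hγ1
  -- basic facts about powers of P
  have hPn_nonneg : ∀ n : ℕ, ∀ i j, 0 ≤ (P ^ n) i j := by
    intro n
    induction n with
    | zero => intro i j; simp [Matrix.one_apply]; positivity
    | succ n ih =>
      intro i j
      rw [pow_succ, Matrix.mul_apply]
      exact Finset.sum_nonneg fun k _ => mul_nonneg (ih i k) (hnn k j)
  have hPn_row : ∀ n : ℕ, ∀ i, ∑ j, (P ^ n) i j = 1 := by
    intro n
    induction n with
    | zero => intro i; simp [Matrix.one_apply]
    | succ n ih =>
      intro i
      simp only [pow_succ, Matrix.mul_apply]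
      rw [Finset.sum_comm]
      calc ∑ k, ∑ j, (P ^ n) i k * P k j
          = ∑ k, (P ^ n) i k * ∑ j, P k j := by
            refine Finset.sum_congr rfl fun k _ => ?_
            rw [Finset.mul_sum]
        _ = 1 := by simp [hrow, ih i]
  have hPn_le_one : ∀ n : ℕ, ∀ i j, (P ^ n) i j ≤ 1 := by
    intro n i j
    calc (P ^ n) i j ≤ ∑ j', (P ^ n) i j' :=
          Finset.single_le_sum (fun k _ => hPn_nonneg n i k) (Finset.mem_univ j)
      _ = 1 := hPn_row n i
  -- h n = mass on transient states at time n
  set h : ℕ → ℝ := fun n => ∑ t' ∈ Rᶜ, (P ^ n) t t' with hh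
  have hh_nonneg : ∀ n, 0 ≤ h n := fun n =>
    Finset.sum_nonneg fun t' _ => hPn_nonneg n t t'
  have hh_partial : ∀ m : ℕ, ∑ n ∈ Finset.range m, h n ≤ ((Rᶜ : Finset S).card : ℝ) * N := by
    intro m
    rw [Finset.sum_comm]
    calc ∑ t' ∈ Rᶜ, ∑ n ∈ Finset.range m, (P ^ n) t t'
        ≤ ∑ _t' ∈ Rᶜ, N := by
          refine Finset.sum_le_sum fun t' ht' => ?_
          exact hvisit t ht t' (Finset.mem_compl.mp ht') m
      _ = ((Rᶜ : Finset S).card : ℝ) * N := by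
          rw [Finset.sum_const, nsmul_eq_mul]
  have hh_summable : Summable h :=
    summable_of_sum_range_le hh_nonneg hh_partial
  have hh_tsum : ∑' n, h n ≤ ((Rᶜ : Finset S).card : ℝ) * N :=
    Real.tsum_le_of_sum_range_le hh_nonneg hh_partial
  -- summability of the main series
  set M : ℝ := ∑ s, |W s| with hM
  have hmain_summable : Summable (fun n : ℕ => γ ^ n * ((P ^ n).mulVec W) t) := by
    apply Summable.of_norm_bounded (g := fun n => γ ^ n * M)
    · exact (summable_geometric_of_lt_one hγ0.le hγ1).mul_right M
    · intro n
      rw [Real.norm_eq_abs, abs_mul, abs_pow, abs_of_pos hγ0]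
      refine mul_le_mul_of_nonneg_left ?_ (by positivity)
      rw [Matrix.mulVec, dotProduct]
      calc |∑ s, (P ^ n) t s * W s| ≤ ∑ s, |(P ^ n) t s * W s| :=
            Finset.abs_sum_le_sum_abs _ _
        _ ≤ ∑ s, |W s| := by
            refine Finset.sum_le_sum fun s _ => ?_
            rw [abs_mul, abs_of_nonneg (hPn_nonneg n t s)]
            exact mul_le_of_le_one_left (abs_nonneg _) (hPn_le_one n t s)
  -- pointwise lower bound
  have hpoint : ∀ n : ℕ, wB * h n ≤ γ ^ n * ((P ^ n).mulVec W) t := by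
    intro n
    have hγn0 : 0 < γ ^ n := pow_pos hγ0 n
    have hγn1 : γ ^ n ≤ 1 := pow_le_one₀ hγ0.le hγ1.le
    have h1 : wB * h n ≤ ((P ^ n).mulVec W) t := by
      rw [Matrix.mulVec, dotProduct, hh, Finset.mul_sum]
      calc ∑ t' ∈ Rᶜ, wB * (P ^ n) t t'
          ≤ ∑ t' ∈ Rᶜ, (P ^ n) t t' * W t' := by
            refine Finset.sum_le_sum fun t' ht' => ?_
            rw [mul_comm]
            exact mul_le_mul_of_nonneg_left
              (hWT t' (Finset.mem_compl.mp ht')) (hPn_nonneg n t t')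
        _ ≤ ∑ s, (P ^ n) t s * W s := by
            refine Finset.sum_le_sum_of_subset_of_nonneg (Finset.subset_univ _) ?_
            intro s _ hs
            rw [Finset.mem_compl, not_not] at hs
            exact mul_nonneg (hPn_nonneg n t s) (hWR s hs)
    have h2 : wB * h n ≤ 0 := mul_nonpos_of_nonpos_of_nonneg hwB.le (hh_nonneg n)
    nlinarith [mul_le_mul_of_nonneg_left h1 hγn0.le]
  -- assemble
  have hg_summable : Summable (fun n => wB * h n) := hh_summable.mul_left wB
  calc ((Rᶜ : Finset S).card : ℝ) * N * wB
      ≤ ∑' n, wB * h n := by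
        rw [tsum_mul_left]
        nlinarith [hh_tsum]
    _ ≤ ∑' n, γ ^ n * ((P ^ n).mulVec W) t :=
        Summable.tsum_le_tsum hpoint hg_summable hmain_summable
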